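/- On the affine line 𝔸 over a field F, for any ζ ∈ F the bracket [x,y] := ζ ▷_x y (i.e. [x,y] = ζy + (1-ζ)x) is a Lie affgebra bracket: it is bi-affine and satisfies ⟨[a,b],[a,a],[b,a]⟩ = [b,b] and the affine Jacobi identity ⟨[a,[b,c]],[a,a],[b,[c,a]],[b,b],[c,[a,b]]⟩ = [c,c]. -/
import Mathlib


/-- On the affine line `𝔸 = F` (with `⟨a,b,c⟩ = a - b + c` and
`λ ▷_a b = λb + (1-λ)a`), for any `ζ ∈ F` the bracket `[x,y] := ζ ▷_x y`
is a Lie affgebra bracket: bi-affine, and it satisfies the affine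
antisymmetry and Jacobi identities. -/
theorem affine_line_zeta_bracket_is_lie_affgebra {F : Type*} [Field F] (ζ : F) :
    let t : F → F → F → F := fun a b c => a - b + c
    let act : F → F → F → F := fun l a b => l * b + (1 - l) * a
    let br : F → F → F := fun x y => ζ * y + (1 - ζ) * x
    -- bi-affine
    (∀ a b c x : F, br (t a b c) x = t (br a x) (br b x) (br c x)) ∧
    (∀ (l : F) (a b x : F), br (act l a b) x = act l (br a x) (br b x)) ∧
    (∀ x a b c : F, br x (t a b c) = t (br x a) (br x b) (br x c)) ∧
    (∀ (l : F) (x a b : F), br x (act l a b) = act l (br x a) (br x b)) ∧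
    -- affine antisymmetry
    (∀ a b : F, t (br a b) (br a a) (br b a) = br b b) ∧
    -- affine Jacobi identity
    (∀ a b c : F,
      t (br a (br b c)) (br a a) (t (br b (br c a)) (br b b) (br c (br a b))) = br c c) := by
  intro t act br
  refine ⟨fun a b c x => by simp only [t, act, br]; ring, fun l a b x => by simp only [t, act, br]; ring, fun x a b c => by simp only [t, act, br]; ring, fun l x a b => by simp only [t, act, br]; ring, fun a b => by simp only [t, act, br]; ring, fun a b c => by simp only [t, act, br]; ring⟩
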